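/- In any Dallajascar (φ, H, r) on S, the induced relation ≺ is a strict total order: (a) for all x, y : S with x ≠ y, either x ≺ y or y ≺ x; and (b) for all x, y, z : S, if x ≺ y and y ≺ z then x ≺ z. -/

import Mathlib

/-- A *Dallajascar* on a finite nonempty type `S`: a parent function `phi : S → Option S`,
an ordered-children function `H : S → List S`, and a root `r : S`, such that
(i) `phi r = none`; (ii) `phi x ≠ none` for `x ≠ r`; (iii) the transitive closure of the
parent relation is irreflexive; (iv) `H x` is a duplicate-free list whose members are
exactly the `y` with `phi y = some x`. -/
structure Dallajascar (S : Type*) [Fintype S] [Nonempty S] where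
  phi : S → Option S
  H : S → List S
  r : S
  phi_root : phi r = none
  phi_ne_none : ∀ x : S, x ≠ r → phi x ≠ none
  acyclic : ∀ x : S, ¬ Relation.TransGen (fun y z => phi y = some z) x x
  H_nodup : ∀ x : S, (H x).Nodup
  mem_H : ∀ x y : S, y ∈ H x ↔ phi y = some x

namespace Dallajascar

variable {S : Type*} [Fintype S] [Nonempty S]

/-- The parent relation: `P D y x` iff `x` is the parent of `y`. -/
def P (D : Dallajascar S) (y x : S) : Prop := D.phi y = some x

/-- `Nest D x y` : « x emboîte y », i.e. `x` is a strict ancestor of `y`. -/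
def Nest (D : Dallajascar S) (x y : S) : Prop := Relation.TransGen D.P y x

/-- `Prec D x y` : « x précède y » : there are ancestors-or-selves `x'` of `x` and `y'`
of `y` with a common parent `a`, `x'` occurring strictly before `y'` in `H a`. -/
def Prec (D : Dallajascar S) (x y : S) : Prop :=
  ∃ a x' y' : S, Relation.ReflTransGen D.P x x' ∧ Relation.ReflTransGen D.P y y' ∧
    D.phi x' = some a ∧ D.phi y' = some a ∧
    ∃ i j : ℕ, i < j ∧ (D.H a)[i]? = some x' ∧ (D.H a)[j]? = some y'

/-- `Lt D x y` : `x ≺ y`, i.e. `x ∫ y` or `x ⊐ y`. -/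
def Lt (D : Dallajascar S) (x y : S) : Prop := D.Nest x y ∨ D.Prec x y

/-- The parent function is deterministic. -/
lemma P_det (D : Dallajascar S) {x a b : S} (h1 : D.P x a) (h2 : D.P x b) : a = b :=
  Option.some.inj (h1.symm.trans h2)

/-- The strict-ancestor relation is well-founded. -/
lemma wf_anc (D : Dallajascar S) : WellFounded (Relation.TransGen D.P) := by
  have ht : IsTrans S (Relation.TransGen D.P) := ⟨fun a b c h1 h2 => h1.trans h2⟩
  have hi : IsIrrefl S (Relation.TransGen D.P) := ⟨fun a h => D.acyclic a h⟩
  exact Finite.wellFounded_of_trans_of_irrefl _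

/-- Any two ancestors-or-selves of a node are comparable. -/
lemma chain_comp (D : Dallajascar S) {x z1 z2 : S}
    (h1 : Relation.ReflTransGen D.P x z1) (h2 : Relation.ReflTransGen D.P x z2) :
    Relation.ReflTransGen D.P z1 z2 ∨ Relation.ReflTransGen D.P z2 z1 := by
  revert h2
  induction h1 using Relation.ReflTransGen.head_induction_on with
  | refl => intro h2; exact Or.inl h2
  | head hac hcz1 ih =>
    intro h2
    rcases h2.cases_head with rfl | ⟨d, had, hd⟩
    · exact Or.inr (Relation.ReflTransGen.head hac hcz1)
    · exact ih (by rw [D.P_det hac had]; exact hd)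

/-- Core of totality: any two nodes with a common ancestor are comparable under `Lt`. -/
lemma tot_core (D : Dallajascar S) : ∀ z x y : S,
    Relation.ReflTransGen D.P x z → Relation.ReflTransGen D.P y z →
    x = y ∨ D.Lt x y ∨ D.Lt y x := by
  intro z
  induction z using D.wf_anc.induction with
  | _ z ih =>
    intro x y hx hy
    rcases hx.cases_tail with rfl | ⟨x', hxx', hx'z⟩
    · rcases Relation.reflTransGen_iff_eq_or_transGen.mp hy with h | h
      · exact Or.inl h
      · exact Or.inr (Or.inl (Or.inl h))
    · rcases hy.cases_tail with rfl | ⟨y', hyy', hy'z⟩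
      · rcases Relation.reflTransGen_iff_eq_or_transGen.mp hx with h | h
        · exact Or.inl h.symm
        · exact Or.inr (Or.inr (Or.inl h))
      · by_cases hxy' : x' = y'
        · subst hxy'
          exact ih x' (Relation.TransGen.single hx'z) x y hxx' hyy'
        · have hxm : x' ∈ D.H z := (D.mem_H z x').mpr hx'z
          have hym : y' ∈ D.H z := (D.mem_H z y').mpr hy'z
          obtain ⟨i, hi⟩ := List.mem_iff_getElem?.mp hxm
          obtain ⟨j, hj⟩ := List.mem_iff_getElem?.mp hym
          have hij : i ≠ j := fun h => hxy' (by
            rw [h] at hi; exact Option.some.inj (hi.symm.trans hj))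
          rcases lt_or_gt_of_ne hij with h | h
          · exact Or.inr (Or.inl (Or.inr ⟨z, x', y', hxx', hyy', hx'z, hy'z, i, j, h, hi, hj⟩))
          · exact Or.inr (Or.inr (Or.inr ⟨z, y', x', hyy', hxx', hy'z, hx'z, j, i, h, hj, hi⟩))

/-- Every node reaches the root. -/
lemma to_root (D : Dallajascar S) : ∀ x : S, Relation.ReflTransGen D.P x D.r := by
  have hwf : WellFounded (fun a b : S => Relation.TransGen D.P b a) := by
    have ht : IsTrans S (fun a b : S => Relation.TransGen D.P b a) :=
      ⟨fun a b c h1 h2 => h2.trans h1⟩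
    have hi : IsIrrefl S (fun a b : S => Relation.TransGen D.P b a) :=
      ⟨fun a h => D.acyclic a h⟩
    exact Finite.wellFounded_of_trans_of_irrefl _
  intro x
  induction x using hwf.induction with
  | _ x ihx =>
    by_cases hx : x = D.r
    · exact hx ▸ Relation.ReflTransGen.refl
    · rcases ho : D.phi x with _ | a
      · exact absurd ho (D.phi_ne_none x hx)
      · exact Relation.ReflTransGen.head ho (ihx a (Relation.TransGen.single ho))

/-- The relation `≺` induced by a Dallajascar is a strict total order: total on distinct
elements, and transitive. -/
theorem lt_total_and_trans (D : Dallajascar S) :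
    (∀ x y : S, x ≠ y → D.Lt x y ∨ D.Lt y x) ∧
    (∀ x y z : S, D.Lt x y → D.Lt y z → D.Lt x z) := by
  constructor
  · intro x y hxy
    rcases D.tot_core D.r x y (D.to_root x) (D.to_root y) with h | h
    · exact absurd h hxy
    · exact h
  · rintro x y z (h1 | h1) (h2 | h2)
    · -- Nest, Nest
      exact Or.inl (h2.trans h1)
    · -- Nest x y, Prec y z
      obtain ⟨a, y1, z', hyy1, hzz', hy1a, hz'a, i, j, hij, hi, hj⟩ := h2
      rcases D.chain_comp hyy1 h1.to_reflTransGen with hcase | hcase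
      · -- y1 →* x
        rcases Relation.reflTransGen_iff_eq_or_transGen.mp hcase with h | h
        · exact Or.inr ⟨a, y1, z', h ▸ Relation.ReflTransGen.refl, hzz', hy1a, hz'a,
            i, j, hij, hi, hj⟩
        · obtain ⟨c, hc, hcx⟩ := Relation.TransGen.head'_iff.mp h
          have hca : c = a := D.P_det hc hy1a
          have : Relation.TransGen D.P z x :=
            Relation.TransGen.trans_left (Relation.TransGen.tail' hzz' hz'a) (hca ▸ hcx)
          exact Or.inl this
      · -- x →* y1
        exact Or.inr ⟨a, y1, z', hcase, hzz', hy1a, hz'a, i, j, hij, hi, hj⟩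
    · -- Prec x y, Nest y z
      obtain ⟨a, x', y1, hxx', hyy1, hx'a, hy1a, i, j, hij, hi, hj⟩ := h1
      exact Or.inr ⟨a, x', y1, hxx', h2.to_reflTransGen.trans hyy1, hx'a, hy1a,
        i, j, hij, hi, hj⟩
    · -- Prec x y, Prec y z
      obtain ⟨a, x', y1, hxx', hyy1, hx'a, hy1a, i, j, hij, hi, hj⟩ := h1
      obtain ⟨b, y2, z', hyy2, hzz', hy2b, hz'b, k, l, hkl, hk, hl⟩ := h2
      by_cases hy12 : y1 = y2
      · subst hy12
        have hab : a = b := Option.some.inj (hy1a.symm.trans hy2b)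
        subst hab
        have hjlen : j < (D.H a).length := by
          rcases List.getElem?_eq_some_iff.mp hj with ⟨h, _⟩; exact h
        have hjk : j = k := (List.getElem?_inj hjlen (D.H_nodup a)).mp (hj.trans hk.symm)
        exact Or.inr ⟨a, x', z', hxx', hzz', hx'a, hz'b, i, l,
          lt_trans (hjk ▸ hij) hkl, hi, hl⟩
      · rcases D.chain_comp hyy1 hyy2 with hcase | hcase
        · -- y1 →* y2, so y1 ≠ y2 gives TransGen
          rcases Relation.reflTransGen_iff_eq_or_transGen.mp hcase with h | h
          · exact absurd h.symm hy12
          · obtain ⟨c, hc, hcy2⟩ := Relation.TransGen.head'_iff.mp h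
            have hca : c = a := D.P_det hc hy1a
            have hxy2 : Relation.ReflTransGen D.P x y2 :=
              ((hxx'.tail hx'a).trans (hca ▸ hcy2))
            exact Or.inr ⟨b, y2, z', hxy2, hzz', hy2b, hz'b, k, l, hkl, hk, hl⟩
        · -- y2 →* y1
          rcases Relation.reflTransGen_iff_eq_or_transGen.mp hcase with h | h
          · exact absurd h hy12
          · obtain ⟨c, hc, hcy1⟩ := Relation.TransGen.head'_iff.mp h
            have hcb : c = b := D.P_det hc hy2b
            have hzy1 : Relation.ReflTransGen D.P z y1 :=
              ((hzz'.tail hz'b).trans (hcb ▸ hcy1))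
            exact Or.inr ⟨a, x', y1, hxx', hzy1, hx'a, hy1a, i, j, hij, hi, hj⟩

end Dallajascar
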